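/- Let n \geq 1 be an integer and define h(p) = p^{-(p+1/2)} (p+n)^{p+n+1/2} for p \geq 1. Then h is strictly convex on [1, \infty); specifically, h''(p) > h(p)/(16 p^2 (p+n)^2) > 0 for all p \geq 1. -/

import Mathlib

open Set

/-- Polynomial positivity certificate (all coefficients nonnegative, constant 76). -/
lemma stirling_Qpos (a b : ℝ) (ha : 0 ≤ a) (hb : 0 ≤ b) :
    0 < 76 + 576*b + 1419*b^2 + 1688*b^3 + (4275/4)*b^4 + 348*b^5 + 46*b^6 +
      80*a + 1794*a*b + 5202*a*b^2 + 6331*a*b^3 + 3864*a*b^4 + 1170*a*b^5 + 140*a*b^6 +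
      43*a^2 + 3252*a^2*b + (18279/2)*a^2*b^2 + 10028*a^2*b^3 + 5277*a^2*b^4 +
      1314*a^2*b^5 + 121*a^2*b^6 + 18*a^3 + 3021*a^3*b + 7368*a^3*b^2 + 6480*a^3*b^3 +
      2436*a^3*b^4 + 330*a^3*b^5 + (15/4)*a^4 + 1464*a^4*b + 2907*a^4*b^2 +
      1806*a^4*b^3 + 357*a^4*b^4 + 360*a^5*b + 540*a^5*b^2 + 180*a^5*b^3 +
      36*a^6*b + 36*a^6*b^2 := by positivity

/-- Cubic lower bound for `-log (1-t)` on `[0,1)`. -/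
lemma stirling_log_lb {t : ℝ} (h0 : 0 ≤ t) (h1 : t < 1) :
    t + t^2/2 + t^3/3 ≤ -Real.log (1 - t) := by
  set f : ℝ → ℝ := fun u => -Real.log (1 - u) - (u + u^2/2 + u^3/3) with hf
  have hder : ∀ u ∈ Ioo (0:ℝ) t, HasDerivAt f ((1-u)⁻¹ - (1 + u + u^2)) u := by
    intro u hu
    have h1u : (1:ℝ) - u ≠ 0 := by
      have := hu.2; have := h1; intro h; nlinarith [hu.1]
    have l1 : HasDerivAt (fun y : ℝ => Real.log (1 - y)) ((1-u)⁻¹ * (-1)) u := by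
      exact (Real.hasDerivAt_log h1u).comp u ((hasDerivAt_id u).const_sub 1)
    have l2 : HasDerivAt (fun y : ℝ => y + y^2/2 + y^3/3) (1 + u + u^2) u := by
      have := (((hasDerivAt_id u).add (((hasDerivAt_pow 2 u).div_const 2))).add
        ((hasDerivAt_pow 3 u).div_const 3))
      refine this.congr_deriv ?_
      norm_num
    have := l1.neg.sub l2
    refine this.congr_deriv ?_
    ring
  have hcont : ContinuousOn f (Icc 0 t) := by
    apply ContinuousOn.sub
    · apply ContinuousOn.neg
      apply ContinuousOn.log
      · exact (continuousOn_const.sub continuousOn_id)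
      · intro x hx
        have := hx.2
        intro h; nlinarith
    · fun_prop
  have hmono : MonotoneOn f (Icc 0 t) := by
    apply monotoneOn_of_deriv_nonneg (convex_Icc 0 t) hcont
    · intro u hu
      rw [interior_Icc] at hu
      exact ((hder u hu).differentiableAt).differentiableWithinAt
    · intro u hu
      rw [interior_Icc] at hu
      rw [(hder u hu).deriv]
      have hu1 : 0 < 1 - u := by nlinarith [hu.1, hu.2]
      have h2 : 1 + u + u^2 ≤ (1-u)⁻¹ := by
        rw [show (1-u)⁻¹ = 1/(1-u) by rw [one_div], le_div_iff₀ hu1]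
        nlinarith [pow_nonneg hu.1.le 3]
      linarith
  have h00 : f 0 = 0 := by simp [hf]
  have := hmono (left_mem_Icc.mpr h0) (right_mem_Icc.mpr h0) h0
  rw [h00] at this
  have : 0 ≤ f t := this
  simp only [hf] at this
  linarith

noncomputable def sH (N : ℝ) : ℝ → ℝ :=
  fun x => Real.exp (-(x + 1/2) * Real.log x + (x + N + 1/2) * Real.log (x + N))

noncomputable def sG1 (N : ℝ) : ℝ → ℝ :=
  fun x => (Real.log (x + N) - Real.log x) - N / (2*x*(x+N))

noncomputable def sG2 (N : ℝ) : ℝ → ℝ :=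
  fun x => -N/(x*(x+N)) + 1/(2*x^2) - 1/(2*(x+N)^2)

lemma sH_hasDerivAt {N x : ℝ} (hN : 0 < N) (hx : 0 < x) :
    HasDerivAt (sH N) (sG1 N x * sH N x) x := by
  have hx0 : x ≠ 0 := ne_of_gt hx
  have hxN : 0 < x + N := by linarith
  have l1 : HasDerivAt Real.log x⁻¹ x := Real.hasDerivAt_log hx0
  have l2 : HasDerivAt (fun y : ℝ => Real.log (y + N)) (x + N)⁻¹ x := by
    exact ((Real.hasDerivAt_log (ne_of_gt hxN)).comp x ((hasDerivAt_id x).add_const N)).congr_deriv (mul_one _)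
  have p1 : HasDerivAt (fun y : ℝ => -(y + 1/2) * Real.log y)
      ((-1) * Real.log x + (-(x + 1/2)) * x⁻¹) x := by
    have base : HasDerivAt (fun y : ℝ => -(y + 1/2)) (-1) x := ((hasDerivAt_id x).add_const _).neg
    exact base.mul l1
  have p2 : HasDerivAt (fun y : ℝ => (y + N + 1/2) * Real.log (y + N))
      (1 * Real.log (x + N) + (x + N + 1/2) * (x + N)⁻¹) x := by
    have base : HasDerivAt (fun y : ℝ => y + N + 1/2) 1 x :=
      ((hasDerivAt_id x).add_const N).add_const _
    exact base.mul l2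
  have pg := (p1.add p2).exp
  refine HasDerivAt.congr_deriv (f := sH N) pg ?_
  symm
  show sG1 N x * sH N x = _
  unfold sG1 sH
  simp only [Pi.add_apply]
  have hxN0 : x + N ≠ 0 := ne_of_gt hxN
  field_simp
  ring

lemma sG1_hasDerivAt {N x : ℝ} (hN : 0 < N) (hx : 0 < x) :
    HasDerivAt (sG1 N) (sG2 N x) x := by
  have hx0 : x ≠ 0 := ne_of_gt hx
  have hxN : 0 < x + N := by linarith
  have hxN0 : x + N ≠ 0 := ne_of_gt hxN
  have l1 : HasDerivAt Real.log x⁻¹ x := Real.hasDerivAt_log hx0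
  have l2 : HasDerivAt (fun y : ℝ => Real.log (y + N)) (x + N)⁻¹ x := by
    exact ((Real.hasDerivAt_log (ne_of_gt hxN)).comp x ((hasDerivAt_id x).add_const N)).congr_deriv (mul_one _)
  have hD : HasDerivAt (fun y : ℝ => 2*y*(y+N)) (2*(x+N) + 2*x) x := by
    have := ((hasDerivAt_id x).const_mul (2:ℝ)).mul ((hasDerivAt_id x).add_const N)
    refine this.congr_deriv ?_
    simp only [id_eq]; ring
  have hDne : 2*x*(x+N) ≠ 0 := by positivity
  have hq : HasDerivAt (fun y : ℝ => N / (2*y*(y+N)))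
      ((0 * (2*x*(x+N)) - N * (2*(x+N) + 2*x)) / (2*x*(x+N))^2) x :=
    (hasDerivAt_const x N).div hD hDne
  have := (l2.sub l1).sub hq
  refine HasDerivAt.congr_deriv (f := sG1 N) this ?_
  symm
  show sG2 N x = _
  unfold sG2
  field_simp
  ring

lemma stirling_main_ineq {N x : ℝ} (hN : 1 ≤ N) (hx : 1 ≤ x) :
    1/(16*x^2*(x+N)^2) < sG2 N x + (sG1 N x)^2 := by
  have hx0 : (0:ℝ) < x := by linarith
  have hN0 : (0:ℝ) < N := by linarith
  have hq0 : (0:ℝ) < x + N := by linarith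
  set t : ℝ := N / (x + N) with ht
  have ht0 : 0 ≤ t := by positivity
  have ht1 : t < 1 := by
    rw [ht, div_lt_one hq0]; linarith
  have hlog : Real.log (x+N) - Real.log x = -Real.log (1 - t) := by
    have h1t : 1 - t = x / (x+N) := by
      rw [ht]; field_simp; ring
    rw [h1t, Real.log_div (ne_of_gt hx0) (ne_of_gt hq0)]; ring
  have hlb := stirling_log_lb ht0 ht1
  set B : ℝ := t + t^2/2 + t^3/3 - N/(2*x*(x+N)) with hB
  have hG1ge : B ≤ sG1 N x := by
    unfold sG1
    rw [hlog]
    linarith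
  have hAt : N/(2*x*(x+N)) = (t/x)/2 := by
    rw [ht, div_div, div_div]
    congr 1
    ring
  have hB0 : 0 ≤ B := by
    have h1 : t / x ≤ t := div_le_self ht0 hx
    have h2 : (t/x)/2 ≤ t := by linarith [div_nonneg (div_nonneg ht0 hx0.le) (by norm_num : (0:ℝ) ≤ 2)]
    rw [hB, hAt]
    nlinarith [sq_nonneg t, pow_nonneg ht0 3]
  have hsq : B^2 ≤ (sG1 N x)^2 := pow_le_pow_left₀ hB0 hG1ge 2
  have ha : (0:ℝ) ≤ x - 1 := by linarith
  have hb : (0:ℝ) ≤ N - 1 := by linarith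
  have hQ := stirling_Qpos (x-1) (N-1) ha hb
  set a : ℝ := x - 1
  set b : ℝ := N - 1
  have hden : (0:ℝ) < 36 * x^2 * (x+N)^6 := by positivity
  have key : sG2 N x + B^2 - 1/(16*x^2*(x+N)^2) =
      (76 + 576*b + 1419*b^2 + 1688*b^3 + (4275/4)*b^4 + 348*b^5 + 46*b^6 +
      80*a + 1794*a*b + 5202*a*b^2 + 6331*a*b^3 + 3864*a*b^4 + 1170*a*b^5 + 140*a*b^6 +
      43*a^2 + 3252*a^2*b + (18279/2)*a^2*b^2 + 10028*a^2*b^3 + 5277*a^2*b^4 +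
      1314*a^2*b^5 + 121*a^2*b^6 + 18*a^3 + 3021*a^3*b + 7368*a^3*b^2 + 6480*a^3*b^3 +
      2436*a^3*b^4 + 330*a^3*b^5 + (15/4)*a^4 + 1464*a^4*b + 2907*a^4*b^2 +
      1806*a^4*b^3 + 357*a^4*b^4 + 360*a^5*b + 540*a^5*b^2 + 180*a^5*b^3 +
      36*a^6*b + 36*a^6*b^2) / (36 * x^2 * (x+N)^6) := by
    have hax : a = x - 1 := rfl
    have hbN : b = N - 1 := rfl
    unfold sG2
    rw [hB, ht, hax, hbN]
    field_simp
    ring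
  have hpos : 0 < sG2 N x + B^2 - 1/(16*x^2*(x+N)^2) := by
    rw [key]
    exact div_pos hQ hden
  clear_value t B a b
  linarith [hpos, hsq]

/-- The Stirling-approximated binomial growth function
`h(p) = p^{-(p+1/2)} (p+n)^{p+n+1/2}` is strictly convex on `[1,∞)`; in fact
`h''(p) > h(p)/(16 p² (p+n)²) > 0` for all `p ≥ 1`. -/
theorem stirling_h_strict_convex
    (n : ℕ) (hn : 1 ≤ n)
    (h : ℝ → ℝ)
    (hh : h = fun p => p ^ (-(p + 1/2)) * (p + n) ^ (p + (n : ℝ) + 1/2)) :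
    StrictConvexOn ℝ (Ici 1) h ∧
      ∀ p : ℝ, 1 ≤ p →
        h p / (16 * p ^ 2 * (p + n) ^ 2) < deriv (deriv h) p ∧
        0 < h p / (16 * p ^ 2 * (p + n) ^ 2) := by
  have hN1 : (1:ℝ) ≤ (n:ℝ) := by exact_mod_cast hn
  have hN0 : (0:ℝ) < (n:ℝ) := by linarith
  set N : ℝ := (n:ℝ) with hNdef
  -- h agrees with sH N on Ioi 0
  have hEq : ∀ x ∈ Ioi (0:ℝ), h x = sH N x := by
    intro x hx
    have hx : (0:ℝ) < x := hx
    have hxN : 0 < x + N := by linarith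
    rw [hh]
    simp only
    rw [Real.rpow_def_of_pos hx, Real.rpow_def_of_pos hxN, ← Real.exp_add]
    unfold sH
    congr 1
    ring
  have hmem : ∀ p : ℝ, 0 < p → Ioi (0:ℝ) ∈ nhds p := fun p hp => isOpen_Ioi.mem_nhds hp
  have hfe : ∀ p : ℝ, 0 < p → h =ᶠ[nhds p] sH N :=
    fun p hp => Filter.eventuallyEq_of_mem (hmem p hp) hEq
  have hd1 : ∀ x : ℝ, 0 < x → deriv h x = sG1 N x * sH N x := by
    intro x hx
    rw [(hfe x hx).deriv_eq]
    exact (sH_hasDerivAt hN0 hx).deriv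
  have hd2 : ∀ p : ℝ, 0 < p → deriv (deriv h) p = (sG2 N p + (sG1 N p)^2) * sH N p := by
    intro p hp
    have e2 : deriv h =ᶠ[nhds p] fun x => sG1 N x * sH N x :=
      Filter.eventuallyEq_of_mem (hmem p hp) (fun x hx => hd1 x hx)
    rw [e2.deriv_eq]
    have hd : HasDerivAt (fun x => sG1 N x * sH N x)
        (sG2 N p * sH N p + sG1 N p * (sG1 N p * sH N p)) p :=
      (sG1_hasDerivAt hN0 hp).mul (sH_hasDerivAt hN0 hp)
    rw [hd.deriv]
    ring
  have hHpos : ∀ x : ℝ, 0 < sH N x := fun x => Real.exp_pos _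
  constructor
  · apply strictConvexOn_of_deriv2_pos (convex_Ici 1)
    · intro x hx
      have hx0 : (0:ℝ) < x := by
        have : (1:ℝ) ≤ x := hx
        linarith
      exact (((sH_hasDerivAt hN0 hx0).congr_of_eventuallyEq
        (hfe x hx0)).differentiableAt).continuousAt.continuousWithinAt
    · intro x hx
      rw [interior_Ici] at hx
      have hx1 : (1:ℝ) < x := hx
      have hx0 : (0:ℝ) < x := by linarith
      have h2 : deriv^[2] h x = deriv (deriv h) x := by
        simp [Function.iterate_succ_apply', Function.iterate_one]
      rw [h2, hd2 x hx0]
      have hmain := stirling_main_ineq hN1 hx1.le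
      have hlhs : 0 < 1/(16*x^2*(x+N)^2) := by positivity
      have : 0 < sG2 N x + (sG1 N x)^2 := by linarith
      exact mul_pos this (hHpos x)
  · intro p hp
    have hp0 : (0:ℝ) < p := by linarith
    have hmain := stirling_main_ineq hN1 hp
    have hheq := hEq p hp0
    constructor
    · rw [hd2 p hp0, hheq]
      have := mul_lt_mul_of_pos_right hmain (hHpos p)
      calc sH N p / (16 * p ^ 2 * (p + N) ^ 2)
          = 1/(16*p^2*(p+N)^2) * sH N p := by ring
        _ < (sG2 N p + (sG1 N p)^2) * sH N p := this
    · rw [hheq]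
      have hpN : 0 < p + N := by linarith
      exact div_pos (hHpos p) (by positivity)
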